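/- arXiv:1809.08944 — 3 statements merged into one kernel-verified Lean document; each statement's English description precedes it below -/
import Mathlib

section
/- Let G be a finite connected graph with radius r and diameter d such that d ≤ 2r - 2. Then G contains a cycle of length at least 4r - 2d, i.e., the circumference of G satisfies c(G) ≥ 4r - 2d. -/
open SimpleGraph

namespace CycAux

variable {V : Type*} [DecidableEq V] {G : SimpleGraph V}

lemma getVert_mem_support : ∀ {u v : V} (p : G.Walk u v) (i : ℕ), p.getVert i ∈ p.support
  | _, _, .nil, i => by
      rw [SimpleGraph.Walk.getVert_of_length_le _ (by simp)]; simp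
  | _, _, .cons h p, 0 => by simp
  | _, _, .cons h p, (n+1) => by
      simp only [SimpleGraph.Walk.getVert_cons_succ, SimpleGraph.Walk.support_cons,
        List.mem_cons]
      exact Or.inr (getVert_mem_support p n)

lemma sep_dist_add (hconn : G.Connected) {m a b : V}
    (hsep : ∀ W : G.Walk a b, m ∈ W.support) :
    G.dist a b = G.dist a m + G.dist m b := by
  obtain ⟨W, hW⟩ := hconn.exists_walk_length_eq_dist a b
  have hm := hsep W
  have h1 : G.dist a m ≤ (W.takeUntil m hm).length := SimpleGraph.dist_le _
  have h2 : G.dist m b ≤ (W.dropUntil m hm).length := SimpleGraph.dist_le _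
  have h3 : (W.takeUntil m hm).length + (W.dropUntil m hm).length = W.length := by
    rw [← SimpleGraph.Walk.length_append, SimpleGraph.Walk.take_spec]
  have h4 := hconn.dist_triangle (u := a) (v := m) (w := b)
  omega

lemma edge_not_mem_path {p q : V} {W : G.Walk p q} (hW : W.IsPath) (hlen : 2 ≤ W.length) :
    s(p, q) ∉ W.edges := by
  intro hmem
  cases W with
  | nil => simp at hmem
  | @cons _ v1 _ h W' =>
    rw [SimpleGraph.Walk.edges_cons, List.mem_cons] at hmem
    rcases hmem with heq | hmem'
    · rw [Sym2.eq_iff] at heq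
      rcases heq with ⟨-, hq⟩ | ⟨hp, -⟩
      · subst hq
        have hW' : W'.IsPath := ((SimpleGraph.Walk.cons_isPath_iff h W').mp hW).1
        rw [SimpleGraph.Walk.isPath_iff_eq_nil] at hW'
        subst hW'
        simp at hlen
      · exact h.ne hp
    · have hpmem : p ∈ W'.support := W'.fst_mem_support_of_mem_edges hmem'
      exact ((SimpleGraph.Walk.cons_isPath_iff h W').mp hW).2 hpmem

lemma not_mem_takeUntil_support {a b w : V} {P : G.Walk a b} (hP : P.IsPath)
    (hw : w ∈ P.support) (hne : w ≠ b) : b ∉ (P.takeUntil w hw).support := by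
  intro hb
  have hsupp : P.support = (P.takeUntil w hw).support ++ (P.dropUntil w hw).support.tail := by
    conv_lhs => rw [← P.take_spec hw]
    rw [SimpleGraph.Walk.support_append]
  have hnodup : ((P.takeUntil w hw).support ++ (P.dropUntil w hw).support.tail).Nodup := by
    rw [← hsupp]; exact hP.support_nodup
  have hdisj := List.disjoint_of_nodup_append hnodup
  have hbd : b ∈ (P.dropUntil w hw).support.tail := by
    have h1 : b ∈ (P.dropUntil w hw).support := SimpleGraph.Walk.end_mem_support _
    rw [SimpleGraph.Walk.support_eq_cons (P.dropUntil w hw)] at h1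
    rcases List.mem_cons.mp h1 with h | h
    · exact absurd h.symm hne
    · exact h
  exact hdisj hb hbd

lemma isPath_append {a b c : V} {P : G.Walk a b} {Q : G.Walk b c}
    (hP : P.IsPath) (hQ : Q.IsPath)
    (hdisj : ∀ x, x ∈ P.support → x ∈ Q.support → x = b) : (P.append Q).IsPath := by
  apply SimpleGraph.Walk.IsPath.mk'
  rw [SimpleGraph.Walk.support_append]
  have hQc : Q.support = b :: Q.support.tail := SimpleGraph.Walk.support_eq_cons Q
  have hQnodup : Q.support.Nodup := hQ.support_nodup
  rw [hQc, List.nodup_cons] at hQnodup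
  refine List.Nodup.append hP.support_nodup hQnodup.2 ?_
  intro x hx1 hx2
  have hx2' : x ∈ Q.support := by rw [hQc]; exact List.mem_cons_of_mem _ hx2
  have := hdisj x hx1 hx2'
  subst this
  exact hQnodup.1 hx2

lemma isCycle_of_two_paths {p q : V} {P1 P2 : G.Walk p q} (h1 : P1.IsPath) (h2 : P2.IsPath)
    (hl1 : 2 ≤ P1.length) (hl2 : 2 ≤ P2.length)
    (hdisj : ∀ x, x ∈ P1.support → x ∈ P2.support → x = p ∨ x = q) :
    (P1.append P2.reverse).IsCycle := by
  refine ⟨⟨⟨?_⟩, ?_⟩, ?_⟩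
  · -- edges nodup
    rw [SimpleGraph.Walk.edges_append]
    refine List.Nodup.append h1.isTrail.edges_nodup h2.reverse.isTrail.edges_nodup ?_
    intro e he1 he2
    rw [SimpleGraph.Walk.edges_reverse, List.mem_reverse] at he2
    induction e using Sym2.ind with
    | _ a b =>
      have hadj : G.Adj a b := P1.adj_of_mem_edges he1
      have ha1 : a ∈ P1.support := P1.fst_mem_support_of_mem_edges he1
      have hb1 : b ∈ P1.support := P1.snd_mem_support_of_mem_edges he1
      have ha2 : a ∈ P2.support := P2.fst_mem_support_of_mem_edges he2
      have hb2 : b ∈ P2.support := P2.snd_mem_support_of_mem_edges he2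
      rcases hdisj a ha1 ha2 with ha | ha <;> rcases hdisj b hb1 hb2 with hb | hb
      · exact hadj.ne (ha.trans hb.symm)
      · subst ha; subst hb; exact edge_not_mem_path h1 hl1 he1
      · subst ha; subst hb
        rw [Sym2.eq_swap] at he1
        exact edge_not_mem_path h1 hl1 he1
      · exact hadj.ne (ha.trans hb.symm)
  · -- ne nil
    intro hnil
    have hlen := congrArg SimpleGraph.Walk.length hnil
    rw [SimpleGraph.Walk.length_append, SimpleGraph.Walk.length_reverse] at hlen
    simp only [SimpleGraph.Walk.length_nil] at hlen
    omega
  · -- support tail nodup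
    have hP1c : P1.support = p :: P1.support.tail := SimpleGraph.Walk.support_eq_cons P1
    have hrev : P2.reverse.support = q :: P2.reverse.support.tail :=
      SimpleGraph.Walk.support_eq_cons _
    have h1n : P1.support.Nodup := h1.support_nodup
    have h2n : P2.reverse.support.Nodup := h2.reverse.support_nodup
    rw [hP1c, List.nodup_cons] at h1n
    rw [hrev, List.nodup_cons] at h2n
    rw [SimpleGraph.Walk.tail_support_append]
    refine List.Nodup.append h1n.2 h2n.2 ?_
    intro x hx1 hx2
    have hx1' : x ∈ P1.support := by rw [hP1c]; exact List.mem_cons_of_mem _ hx1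
    have hx2'' : x ∈ P2.reverse.support := by rw [hrev]; exact List.mem_cons_of_mem _ hx2
    have hx2' : x ∈ P2.support := by
      rwa [SimpleGraph.Walk.support_reverse, List.mem_reverse] at hx2''
    rcases hdisj x hx1' hx2' with h | h
    · subst h; exact h1n.1 hx1
    · subst h; exact h2n.1 hx2

def Unsep (G : SimpleGraph V) (p q : V) : Prop :=
  ∀ z, z ≠ p → z ≠ q → ∃ W : G.Walk p q, z ∉ W.support

def TwoPaths (G : SimpleGraph V) (p q : V) : Prop :=
  ∃ P1 P2 : G.Walk p q, P1.IsPath ∧ P2.IsPath ∧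
    ∀ x, x ∈ P1.support → x ∈ P2.support → x = p ∨ x = q

lemma singleton_edge_isPath {a b : V} (h : G.Adj a b) :
    (SimpleGraph.Walk.cons h SimpleGraph.Walk.nil).IsPath := by
  apply SimpleGraph.Walk.IsPath.mk'
  simp [h.ne]

lemma mem_singleton_edge_support {a b x : V} {h : G.Adj a b}
    (hx : x ∈ (SimpleGraph.Walk.cons h SimpleGraph.Walk.nil).support) : x = a ∨ x = b := by
  simpa using hx

/-- Extend a pair of disjoint paths `p → q'` by one edge `q' — q` into `q`. -/
lemma extend_mem {p q' q : V} {P1 P2 : G.Walk p q'}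
    (h1 : P1.IsPath) (h2 : P2.IsPath)
    (hdisj : ∀ x, x ∈ P1.support → x ∈ P2.support → x = p ∨ x = q')
    (hq1 : q ∈ P1.support) (hq2 : q ∉ P2.support)
    (hqq' : q ≠ q') (hadj : G.Adj q' q) : TwoPaths G p q := by
  refine ⟨P1.takeUntil q hq1, P2.append (SimpleGraph.Walk.cons hadj SimpleGraph.Walk.nil),
    h1.takeUntil hq1, ?_, ?_⟩
  · refine isPath_append h2 (singleton_edge_isPath hadj) ?_
    intro x hx2 hxe
    rcases mem_singleton_edge_support hxe with h | h
    · exact h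
    · exact absurd (h ▸ hx2) hq2
  · intro x hx1 hx2
    have hx1' : x ∈ P1.support := SimpleGraph.Walk.support_takeUntil_subset _ hq1 hx1
    rw [SimpleGraph.Walk.mem_support_append_iff] at hx2
    rcases hx2 with hx2 | hx2
    · rcases hdisj x hx1' hx2 with h | h
      · exact Or.inl h
      · subst h
        exact absurd hx1 (not_mem_takeUntil_support h1 hq1 hqq')
    · rcases mem_singleton_edge_support hx2 with h | h
      · subst h
        exact absurd hx1 (not_mem_takeUntil_support h1 hq1 hqq')
      · exact Or.inr h

/-- Graft a new path from `q` hitting `P1` at `w` to build disjoint `p → q` paths. -/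
lemma graft {p q' q w : V} {P1 P2 : G.Walk p q'} {U : G.Walk q w}
    (h1 : P1.IsPath) (h2 : P2.IsPath)
    (hdisj : ∀ x, x ∈ P1.support → x ∈ P2.support → x = p ∨ x = q')
    (hq2 : q ∉ P2.support)
    (hadj : G.Adj q' q)
    (hU : U.IsPath) (hw1 : w ∈ P1.support) (hq'U : q' ∉ U.support)
    (hhit : ∀ x, x ∈ U.support → (x ∈ P1.support ∨ x ∈ P2.support) → x = w) :
    TwoPaths G p q := by
  have hwq' : w ≠ q' := by
    intro h
    exact hq'U (h ▸ SimpleGraph.Walk.end_mem_support U)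
  have hq'take : q' ∉ (P1.takeUntil w hw1).support :=
    not_mem_takeUntil_support h1 hw1 hwq'
  refine ⟨(P1.takeUntil w hw1).append U.reverse,
    P2.append (SimpleGraph.Walk.cons hadj SimpleGraph.Walk.nil), ?_, ?_, ?_⟩
  · refine isPath_append (h1.takeUntil hw1) hU.reverse ?_
    intro x hx1 hx2
    rw [SimpleGraph.Walk.support_reverse, List.mem_reverse] at hx2
    exact hhit x hx2 (Or.inl (SimpleGraph.Walk.support_takeUntil_subset _ hw1 hx1))
  · refine isPath_append h2 (singleton_edge_isPath hadj) ?_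
    intro x hx2 hxe
    rcases mem_singleton_edge_support hxe with h | h
    · exact h
    · exact absurd (h ▸ hx2) hq2
  · intro x hxB hxA
    rw [SimpleGraph.Walk.mem_support_append_iff] at hxB hxA
    have hxB' : x ∈ P1.support ∨ x ∈ U.support := by
      rcases hxB with h | h
      · exact Or.inl (SimpleGraph.Walk.support_takeUntil_subset _ hw1 h)
      · rw [SimpleGraph.Walk.support_reverse, List.mem_reverse] at h
        exact Or.inr h
    rcases hxA with hxA | hxA
    · -- x ∈ P2.support
      rcases hxB' with h | h
      · rcases hdisj x h hxA with hh | hh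
        · exact Or.inl hh
        · subst hh
          rcases hxB with hb | hb
          · exact absurd hb hq'take
          · rw [SimpleGraph.Walk.support_reverse, List.mem_reverse] at hb
            exact absurd hb hq'U
      · have hxw := hhit x h (Or.inr hxA)
        subst hxw
        -- x = w ∈ P1 and ∈ P2
        rcases hdisj _ hw1 hxA with hh | hh
        · exact Or.inl hh
        · exact absurd hh hwq'
    · rcases mem_singleton_edge_support hxA with h | h
      · subst h
        rcases hxB with hb | hb
        · exact absurd hb hq'take
        · rw [SimpleGraph.Walk.support_reverse, List.mem_reverse] at hb
          exact absurd hb hq'U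
      · exact Or.inr h

lemma exists_prefix_until {q p : V} (W : G.Walk q p) (S : V → Prop) [DecidablePred S]
    (hp : S p) : ∃ w, S w ∧ ∃ U : G.Walk q w,
      (∀ x, x ∈ U.support → x ∈ W.support) ∧
      (∀ x, x ∈ U.support → x ≠ w → ¬ S x) ∧ (W.IsPath → U.IsPath) := by
  induction W with
  | nil =>
    exact ⟨_, hp, SimpleGraph.Walk.nil, by simp, by simp, fun _ => SimpleGraph.Walk.IsPath.nil⟩
  | @cons u v _ h W' ih =>
    by_cases hu : S u
    · exact ⟨_, hu, SimpleGraph.Walk.nil, by simp, by simp, fun _ => SimpleGraph.Walk.IsPath.nil⟩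
    · obtain ⟨w, hw, U', hsub, hmiss, hpath⟩ := ih hp
      refine ⟨w, hw, SimpleGraph.Walk.cons h U', ?_, ?_, ?_⟩
      · intro x hx
        rw [SimpleGraph.Walk.support_cons, List.mem_cons] at hx ⊢
        rcases hx with hx | hx
        · exact Or.inl hx
        · exact Or.inr (hsub x hx)
      · intro x hx hxw
        rw [SimpleGraph.Walk.support_cons, List.mem_cons] at hx
        rcases hx with hx | hx
        · subst hx; exact hu
        · exact hmiss x hx hxw
      · intro hWp
        rw [SimpleGraph.Walk.cons_isPath_iff] at hWp ⊢
        exact ⟨hpath hWp.1, fun hc => hWp.2 (hsub u hc)⟩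

lemma unsep_twoPaths (hconn : G.Connected) :
    ∀ ℓ : ℕ, 2 ≤ ℓ → ∀ p q : V, Unsep G p q → G.dist p q = ℓ → TwoPaths G p q := by
  intro ℓ hℓ
  induction ℓ, hℓ using Nat.le_induction with
  | base =>
    intro p q hU hd
    obtain ⟨W, hWl⟩ := hconn.exists_walk_length_eq_dist p q
    rw [hd] at hWl
    set c0 := W.getVert 1 with hc0
    have hadj1 : G.Adj p c0 := by
      have := W.adj_getVert_succ (i := 0) (by omega)
      rwa [SimpleGraph.Walk.getVert_zero] at this
    have hadj2 : G.Adj c0 q := by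
      have := W.adj_getVert_succ (i := 1) (by omega)
      have h2 : W.getVert 2 = q := by
        have := W.getVert_length
        rwa [hWl] at this
      rwa [h2] at this
    have hpq : p ≠ q := by
      intro h
      subst h
      rw [SimpleGraph.dist_self] at hd
      omega
    obtain ⟨W2, hW2⟩ := hU c0 hadj1.ne' hadj2.ne
    refine ⟨SimpleGraph.Walk.cons hadj1 (SimpleGraph.Walk.cons hadj2 SimpleGraph.Walk.nil),
      W2.bypass, ?_, W2.bypass_isPath, ?_⟩
    · apply SimpleGraph.Walk.IsPath.mk'
      simp [hadj1.ne, hadj2.ne, hadj2.ne', hpq]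
    · intro x hx1 hx2
      have hc0n : c0 ∉ W2.bypass.support := fun hc => hW2 (W2.support_bypass_subset hc)
      simp only [SimpleGraph.Walk.support_cons, SimpleGraph.Walk.support_nil,
        List.mem_cons, List.mem_singleton] at hx1
      rcases hx1 with h | h | h
      · exact Or.inl h
      · exact absurd (h ▸ hx2) hc0n
      · simpa using Or.inr h
  | succ ℓ hℓ ih =>
    intro p q hU hd
    obtain ⟨W, hWl⟩ := hconn.exists_walk_length_eq_dist p q
    have hWp : W.IsPath := W.isPath_of_length_eq_dist hWl
    rw [hd] at hWl
    set q' := W.getVert ℓ with hq'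
    have hadj : G.Adj q' q := by
      have := W.adj_getVert_succ (i := ℓ) (by omega)
      have h2 : W.getVert (ℓ + 1) = q := by
        have := W.getVert_length
        rwa [hWl] at this
      rwa [h2] at this
    have hq'mem : q' ∈ W.support := getVert_mem_support W ℓ
    have hqR : q ∉ (W.takeUntil q' hq'mem).support :=
      not_mem_takeUntil_support hWp hq'mem hadj.ne
    have hdropne : (W.dropUntil q' hq'mem).length ≠ 0 := by
      intro h0
      exact hadj.ne (SimpleGraph.Walk.eq_of_length_eq_zero h0)
    have hlsum : (W.takeUntil q' hq'mem).length + (W.dropUntil q' hq'mem).length = ℓ + 1 := by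
      rw [← SimpleGraph.Walk.length_append, SimpleGraph.Walk.take_spec, hWl]
    have hdq' : G.dist p q' = ℓ := by
      have hle : G.dist p q' ≤ (W.takeUntil q' hq'mem).length := SimpleGraph.dist_le _
      have htri := hconn.dist_triangle (u := p) (v := q') (w := q)
      have hq'q : G.dist q' q = 1 := SimpleGraph.dist_eq_one_iff_adj.mpr hadj
      omega
    have hq'p : q' ≠ p := by
      intro h
      rw [h, SimpleGraph.dist_self] at hdq'
      omega
    have hqp : q ≠ p := by
      intro h
      rw [h, SimpleGraph.dist_self] at hd
      omega
    have hUnsep' : Unsep G p q' := by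
      intro z hzp hzq'
      by_cases hzq : z = q
      · subst hzq
        exact ⟨W.takeUntil q' hq'mem, hqR⟩
      · obtain ⟨Wz, hWz⟩ := hU z hzp hzq
        refine ⟨Wz.append (SimpleGraph.Walk.cons hadj.symm SimpleGraph.Walk.nil), ?_⟩
        rw [SimpleGraph.Walk.mem_support_append_iff]
        rintro (h | h)
        · exact hWz h
        · rcases mem_singleton_edge_support h with h | h
          · exact hzq h
          · exact hzq' h
    obtain ⟨P1, P2, h1, h2, hdisj⟩ := ih p q' hUnsep' hdq'
    by_cases hq1 : q ∈ P1.support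
    · have hq2 : q ∉ P2.support := by
        intro hq2
        rcases hdisj q hq1 hq2 with h | h
        · exact hqp h
        · exact hadj.ne' h
      exact extend_mem h1 h2 hdisj hq1 hq2 hadj.ne' hadj
    · by_cases hq2 : q ∈ P2.support
      · exact extend_mem h2 h1 (fun x hx2 hx1 => hdisj x hx1 hx2) hq2 hq1 hadj.ne' hadj
      · obtain ⟨Wz, hWz⟩ := hU q' hq'p hadj.ne
        have hWbp : Wz.bypass.IsPath := Wz.bypass_isPath
        have hq'Wb : q' ∉ Wz.bypass.support := fun hc => hWz (Wz.support_bypass_subset hc)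
        classical
        obtain ⟨w, hwS, U, hUsub, hmiss, hUpath⟩ :=
          exists_prefix_until (Wz.bypass.reverse)
            (fun x => x ∈ P1.support ∨ x ∈ P2.support)
            (Or.inl P1.start_mem_support)
        have hUp : U.IsPath := hUpath hWbp.reverse
        have hq'U : q' ∉ U.support := by
          intro hc
          have := hUsub q' hc
          rw [SimpleGraph.Walk.support_reverse, List.mem_reverse] at this
          exact hq'Wb this
        have hhit : ∀ x, x ∈ U.support → (x ∈ P1.support ∨ x ∈ P2.support) → x = w := by
          intro x hx hS
          by_contra hxw
          exact hmiss x hx hxw hS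
        rcases hwS with hw1 | hw2
        · exact graft h1 h2 hdisj hq2 hadj hUp hw1 hq'U hhit
        · exact graft h2 h1 (fun x hx2 hx1 => hdisj x hx1 hx2) hq1 hadj hUp hw2 hq'U
            (fun x hx hS => hhit x hx hS.symm)

lemma unsep_cycle (hconn : G.Connected) {p q : V} (hU : Unsep G p q)
    (hd2 : 2 ≤ G.dist p q) :
    ∃ (v : V) (c : G.Walk v v), c.IsCycle ∧ 2 * G.dist p q ≤ c.length := by
  obtain ⟨P1, P2, h1, h2, hdisj⟩ := unsep_twoPaths hconn (G.dist p q) hd2 p q hU rfl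
  have hl1 : G.dist p q ≤ P1.length := SimpleGraph.dist_le _
  have hl2 : G.dist p q ≤ P2.length := SimpleGraph.dist_le _
  refine ⟨p, P1.append P2.reverse,
    isCycle_of_two_paths h1 h2 (by omega) (by omega) hdisj, ?_⟩
  rw [SimpleGraph.Walk.length_append, SimpleGraph.Walk.length_reverse]
  omega


end CycAux

/-- The eccentricity of a vertex: the maximum distance to any other vertex. -/
noncomputable def ecc {V : Type*} [Fintype V] (G : SimpleGraph V) (u : V) : ℕ :=
  Finset.univ.sup (G.dist u)

/-- The radius of a graph: the minimum eccentricity. -/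
noncomputable def rad {V : Type*} [Fintype V] (G : SimpleGraph V) : ℕ :=
  sInf (Set.range (ecc G))

/-- The diameter of a graph: the maximum eccentricity. -/
noncomputable def diamG {V : Type*} [Fintype V] (G : SimpleGraph V) : ℕ :=
  Finset.univ.sup (ecc G)

/-- A cut-vertex: a vertex whose removal disconnects the graph. -/
def IsCutVertex {V : Type*} (G : SimpleGraph V) (v : V) : Prop :=
  ¬ (G.induce {w | w ≠ v}).Connected

/-- A finite connected graph with diameter d ≤ 2r - 2 (r the radius) contains a
cycle of length at least 4r - 2d. -/
theorem stmt_0 {V : Type*} [Fintype V] (G : SimpleGraph V) (hconn : G.Connected)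
    (r d : ℕ) (hr : r = rad G) (hd : d = diamG G) (h : d + 2 ≤ 2 * r) :
    ∃ (v : V) (c : G.Walk v v), c.IsCycle ∧ 4 * r - 2 * d ≤ c.length := by
  classical
  have hne : Nonempty V := hconn.nonempty
  -- basic facts about ecc, rad, diam
  have hrecc : ∀ u : V, r ≤ ecc G u := fun u => by
    rw [hr]; exact Nat.sInf_le ⟨u, rfl⟩
  have heccle : ∀ u : V, ecc G u ≤ d := fun u => by
    rw [hd]; exact Finset.le_sup (Finset.mem_univ u)
  have hdistle : ∀ u v' : V, G.dist u v' ≤ ecc G u := fun u v' =>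
    Finset.le_sup (Finset.mem_univ v')
  -- center z with ecc = r
  have hrmem : r ∈ Set.range (ecc G) := by
    rw [hr]; exact Nat.sInf_mem (Set.range_nonempty _)
  obtain ⟨z, hz⟩ := hrmem
  obtain ⟨x, -, hx⟩ := Finset.exists_mem_eq_sup Finset.univ Finset.univ_nonempty (G.dist z)
  have hzx : G.dist z x = r := by
    rw [← hz]; exact hx.symm
  have hrd : r ≤ d := le_trans (hrecc z) (heccle z)
  have hr2 : 2 ≤ r := by omega
  by_cases hsep : CycAux.Unsep G z x
  · -- no separator: use the pair (z, x) at distance r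
    obtain ⟨v, c, hc, hlen⟩ := CycAux.unsep_cycle hconn hsep (by omega)
    rw [hzx] at hlen
    exact ⟨v, c, hc, by omega⟩
  · -- separator of minimal distance from z
    rw [CycAux.Unsep] at hsep
    push_neg at hsep
    obtain ⟨c₁, hc1z, hc1x, hc1sep⟩ := hsep
    have hc1sep' : ∀ W : G.Walk z x, c₁ ∈ W.support := hc1sep
    set K : Set ℕ :=
      {n : ℕ | ∃ c, (c ≠ z ∧ c ≠ x ∧ ∀ W : G.Walk z x, c ∈ W.support) ∧ G.dist z c = n}
      with hK
    have hKne : K.Nonempty := ⟨_, c₁, ⟨hc1z, hc1x, hc1sep'⟩, rfl⟩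
    obtain ⟨c, ⟨hcz, hcx, hcsep⟩, hcd⟩ := Nat.sInf_mem hKne
    -- (z, c) is unseparated
    have hUzc : CycAux.Unsep G z c := by
      intro c' hc'z hc'c
      by_contra hno
      push_neg at hno
      have hno' : ∀ W : G.Walk z c, c' ∈ W.support := hno
      have haddzc : G.dist z c = G.dist z c' + G.dist c' c :=
        CycAux.sep_dist_add hconn hno'
      have hc'cpos : 0 < G.dist c' c := hconn.pos_dist_of_ne hc'c
      have hc'x : c' ≠ x := by
        intro he
        have hxsep : ∀ W : G.Walk z c, x ∈ W.support := he ▸ hno'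
        have haddzcx : G.dist z c = G.dist z x + G.dist x c :=
          CycAux.sep_dist_add hconn hxsep
        have haddzx : G.dist z x = G.dist z c + G.dist c x :=
          CycAux.sep_dist_add hconn hcsep
        have hpos : 0 < G.dist c x := hconn.pos_dist_of_ne hcx
        have hcomm : G.dist x c = G.dist c x := SimpleGraph.dist_comm
        omega
      have hsep' : ∀ W : G.Walk z x, c' ∈ W.support := by
        intro W
        by_contra hW
        have hcW := hcsep W
        have hsub : c' ∉ (W.takeUntil c hcW).support := fun hcc =>
          hW (W.support_takeUntil_subset hcW hcc)
        exact hsub (hno' (W.takeUntil c hcW))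
      have hmin : sInf K ≤ G.dist z c' := Nat.sInf_le ⟨c', ⟨hc'z, hc'x, hsep'⟩, rfl⟩
      omega
    -- y farthest from c
    obtain ⟨y, -, hy⟩ := Finset.exists_mem_eq_sup Finset.univ Finset.univ_nonempty (G.dist c)
    have hcy : r ≤ G.dist c y := by
      rw [← hy]; exact hrecc c
    have hzcpos : 0 < G.dist z c := hconn.pos_dist_of_ne (fun hh => hcz hh.symm)
    -- there is a walk z → y avoiding c
    have hWzy : ∃ W : G.Walk z y, c ∉ W.support := by
      by_contra hno
      push_neg at hno
      have hno' : ∀ W : G.Walk z y, c ∈ W.support := hno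
      have hadd : G.dist z y = G.dist z c + G.dist c y :=
        CycAux.sep_dist_add hconn hno'
      have hzy : G.dist z y ≤ r := by
        rw [← hz]; exact hdistle z y
      omega
    obtain ⟨Wzy, hWzyc⟩ := hWzy
    -- every walk x → y hits c
    have hsxy : ∀ W : G.Walk x y, c ∈ W.support := by
      intro W
      by_contra hW
      have hmem : c ∉ (Wzy.append W.reverse).support := by
        rw [SimpleGraph.Walk.mem_support_append_iff]
        rintro (hh | hh)
        · exact hWzyc hh
        · rw [SimpleGraph.Walk.support_reverse, List.mem_reverse] at hh
          exact hW hh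
      exact hmem (hcsep _)
    have haddxy : G.dist x y = G.dist x c + G.dist c y :=
      CycAux.sep_dist_add hconn hsxy
    have haddzx : G.dist z x = G.dist z c + G.dist c x :=
      CycAux.sep_dist_add hconn hcsep
    have hxyd : G.dist x y ≤ d := le_trans (hdistle x y) (heccle x)
    have hcomm : G.dist x c = G.dist c x := SimpleGraph.dist_comm
    have hell : 2 * r ≤ d + G.dist z c := by omega
    have h2zc : 2 ≤ G.dist z c := by omega
    obtain ⟨v, cyc, hcyc, hlen⟩ := CycAux.unsep_cycle hconn hUzc h2zc
    exact ⟨v, cyc, hcyc, by omega⟩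
end

section
/- Let G be a finite connected graph with radius r and diameter d, with d ≤ 2r - 2, and suppose every cycle of G has length less than 4r - 2d. Then every nonseparable subgraph B of G other than K₂ has diameter (as a subgraph, using distances within B) less than 2r - d. -/
open SimpleGraph

section Helpers

variable {W : Type*} {H : SimpleGraph W}

/-- First-contact prefix of a walk: a walk to the first vertex lying in `L`. -/
lemma exists_firstContact (L : List W) :
    ∀ {v u : W} (Q : H.Walk v u), u ∈ L →
    ∃ x, x ∈ L ∧ ∃ R : H.Walk v x, (∀ y ∈ R.support, y ∈ Q.support) ∧
      (∀ y ∈ R.support, y ∈ L → y = x) := by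
  intro v u Q
  induction Q with
  | nil =>
    intro hu
    exact ⟨_, hu, Walk.nil, fun y hy => hy, by simp +contextual⟩
  | @cons a b c hadj q ih =>
    intro hu
    by_cases ha : a ∈ L
    · exact ⟨a, ha, Walk.nil, by simp, by simp +contextual⟩
    · obtain ⟨x, hxL, R, hsub, hcon⟩ := ih hu
      refine ⟨x, hxL, Walk.cons hadj R, ?_, ?_⟩
      · intro y hy
        rw [Walk.support_cons, List.mem_cons] at hy ⊢
        exact hy.imp id fun h => hsub y h
      · intro y hy hyL
        rw [Walk.support_cons, List.mem_cons] at hy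
        rcases hy with rfl | hy
        · exact absurd hyL ha
        · exact hcon y hy hyL

lemma mem_support_closed_iff {v y : W} (c : H.Walk v v) (hc : ¬ c.Nil) :
    y ∈ c.support ↔ y ∈ c.support.tail := by
  cases c with
  | nil => simp at hc
  | cons h q =>
    simp only [Walk.support_cons, List.tail_cons, List.mem_cons]
    constructor
    · rintro (rfl | hy)
      · exact q.end_mem_support
      · exact hy
    · exact Or.inr

variable [DecidableEq W]

lemma mem_support_rotate_iff {v u y : W} {c : H.Walk v v} (hc : c.IsCycle) (h : u ∈ c.support) :
    y ∈ (c.rotate u h).support ↔ y ∈ c.support := by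
  rw [mem_support_closed_iff _ (hc.rotate h).not_nil, mem_support_closed_iff _ hc.not_nil]
  exact (Walk.support_rotate c u h).mem_iff

/-- Splitting a cycle at a non-base vertex gives two paths. -/
lemma isPath_takeUntil_of_isCycle {w x : W} {c : H.Walk w w} (hc : c.IsCycle)
    (hx : x ∈ c.support) (hxw : x ≠ w) :
    (c.takeUntil x hx).IsPath ∧ (c.dropUntil x hx).IsPath := by
  have hspec := c.take_spec hx
  set T := c.takeUntil x hx with hT
  set D := c.dropUntil x hx with hD
  have hsupp : c.support = T.support ++ D.support.tail := by
    rw [← hspec, Walk.support_append]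
  have htl : c.support.tail = T.support.tail ++ D.support.tail := by
    rw [hsupp, T.support_eq_cons]; rfl
  have hnd : (T.support.tail ++ D.support.tail).Nodup := htl ▸ hc.2
  rw [List.nodup_append] at hnd
  obtain ⟨h1, h2, hdisj⟩ := hnd
  constructor
  · rw [Walk.isPath_def, T.support_eq_cons, List.nodup_cons]
    refine ⟨fun hw' => ?_, h1⟩
    have hwD : w ∈ D.support.tail := Walk.end_mem_tail_support_of_ne hxw D
    exact hdisj w hw' w hwD rfl
  · rw [Walk.isPath_def, D.support_eq_cons, List.nodup_cons]
    refine ⟨fun hx' => ?_, h2⟩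
    have hxT : x ∈ T.support.tail := Walk.end_mem_tail_support_of_ne (Ne.symm hxw) T
    exact hdisj x hxT x hx' rfl

omit [DecidableEq W] in
lemma exists_walk_avoid (hns : ∀ w : W, (H.induce {x | x ≠ w}).Connected)
    {a b w : W} (ha : a ≠ w) (hb : b ≠ w) :
    ∃ Q : H.Walk a b, w ∉ Q.support := by
  obtain ⟨p⟩ := (hns w).preconnected ⟨a, ha⟩ ⟨b, hb⟩
  refine ⟨p.map (Embedding.induce {x | x ≠ w}).toHom, fun hw => ?_⟩
  replace hw : w ∈ (p.map (Embedding.induce {x | x ≠ w}).toHom).support := hw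
  rw [Walk.support_map, List.mem_map] at hw
  obtain ⟨y, _, hy⟩ := hw
  exact y.2 hy

lemma iso_K2_of_two {u v : W} (huv : H.Adj u v) (hall : ∀ z : W, z = u ∨ z = v) :
    Nonempty (H ≃g (⊤ : SimpleGraph (Fin 2))) := by
  classical
  have hne : u ≠ v := huv.ne
  refine ⟨⟨⟨fun z => if z = u then 0 else 1, fun i => if i = 0 then u else v, ?_, ?_⟩, ?_⟩⟩
  · intro z
    rcases hall z with rfl | rfl
    · simp
    · simp [Ne.symm hne]
  · intro i
    fin_cases i
    · simp
    · simp [Ne.symm hne]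
  · intro a b
    simp only [Equiv.coe_fn_mk, top_adj]
    rcases hall a with rfl | rfl <;> rcases hall b with rfl | rfl <;>
      simp [hne, Ne.symm hne, huv, huv.symm]

lemma cycle_of_adj_aux (hns : ∀ w : W, (H.induce {x | x ≠ w}).Connected)
    {u v w : W} (huv : H.Adj u v) (hvw : H.Adj v w) (hwu : w ≠ u) :
    ∃ (a : W) (c : H.Walk a a), c.IsCycle ∧ u ∈ c.support ∧ v ∈ c.support := by
  obtain ⟨Q, hQ⟩ := exists_walk_avoid hns huv.ne hvw.ne'
  set W0 : H.Walk u v := Q.append (Walk.cons hvw.symm Walk.nil) with hW0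
  set P := W0.bypass with hP
  have hPp : P.IsPath := W0.bypass_isPath
  have hedge : s(v, u) ∉ P.edges := by
    intro he
    have he' := W0.edges_bypass_subset he
    rw [hW0, Walk.edges_append, List.mem_append] at he'
    rcases he' with he' | he'
    · exact hQ (Walk.fst_mem_support_of_mem_edges Q he')
    · simp only [Walk.edges_cons, Walk.edges_nil, List.mem_singleton] at he'
      rw [Sym2.eq_iff] at he'
      rcases he' with ⟨rfl, rfl⟩ | ⟨-, rfl⟩
      · exact huv.ne rfl
      · exact hwu rfl
  have hcyc : (Walk.cons huv.symm P).IsCycle :=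
    (Walk.cons_isCycle_iff P huv.symm).mpr ⟨hPp, hedge⟩
  exact ⟨v, Walk.cons huv.symm P, hcyc, by
    rw [Walk.support_cons, List.mem_cons]; exact Or.inr P.start_mem_support,
    Walk.start_mem_support _⟩

lemma cycle_of_adj (hconn : H.Connected) (hns : ∀ w : W, (H.induce {x | x ≠ w}).Connected)
    (hK2 : ¬ Nonempty (H ≃g (⊤ : SimpleGraph (Fin 2))))
    {u v : W} (huv : H.Adj u v) :
    ∃ (a : W) (c : H.Walk a a), c.IsCycle ∧ u ∈ c.support ∧ v ∈ c.support := by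
  by_cases h1 : ∃ w, H.Adj v w ∧ w ≠ u
  · obtain ⟨w, hvw, hwu⟩ := h1
    exact cycle_of_adj_aux hns huv hvw hwu
  by_cases h2 : ∃ w, H.Adj u w ∧ w ≠ v
  · obtain ⟨w, huw, hwv⟩ := h2
    obtain ⟨a, c, hc, hv', hu'⟩ := cycle_of_adj_aux hns huv.symm huw hwv
    exact ⟨a, c, hc, hu', hv'⟩
  push_neg at h1 h2
  exfalso
  apply hK2
  apply iso_K2_of_two huv
  intro z
  by_contra hz
  push_neg at hz
  obtain ⟨hzu, hzv⟩ := hz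
  have huz : u ≠ z := Ne.symm hzu
  have hvz : v ≠ z := Ne.symm hzv
  have hd1 : 0 < H.dist u z := hconn.pos_dist_of_ne huz
  have hd2 : 0 < H.dist v z := hconn.pos_dist_of_ne hvz
  have key1 : H.dist v z ≤ H.dist u z - 1 := by
    obtain ⟨p, hp⟩ := hconn.exists_walk_length_eq_dist u z
    obtain ⟨y, hadj, q, hq⟩ := Walk.exists_eq_cons_of_ne huz p
    have hy : y = v := h2 y hadj
    subst hy
    have hlen : q.length + 1 = H.dist u z := by
      rw [← hp, hq, Walk.length_cons]
    have := dist_le q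
    omega
  have key2 : H.dist u z ≤ H.dist v z - 1 := by
    obtain ⟨p, hp⟩ := hconn.exists_walk_length_eq_dist v z
    obtain ⟨y, hadj, q, hq⟩ := Walk.exists_eq_cons_of_ne hvz p
    have hy : y = u := h1 y hadj
    subst hy
    have hlen : q.length + 1 = H.dist v z := by
      rw [← hp, hq, Walk.length_cons]
    have := dist_le q
    omega
  omega

theorem exists_cycle_through (hconn : H.Connected)
    (hns : ∀ w : W, (H.induce {x | x ≠ w}).Connected)
    (hK2 : ¬ Nonempty (H ≃g (⊤ : SimpleGraph (Fin 2)))) :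
    ∀ (n : ℕ) (u v : W), H.dist u v = n → u ≠ v →
      ∃ (a : W) (c : H.Walk a a), c.IsCycle ∧ u ∈ c.support ∧ v ∈ c.support := by
  intro n
  induction n using Nat.strong_induction_on with
  | _ n IH =>
  intro u v hdist hne
  match n, hdist with
  | 0, hdist => exact absurd hdist (by have := hconn.pos_dist_of_ne hne; omega)
  | 1, hdist => exact cycle_of_adj hconn hns hK2 (dist_eq_one_iff_adj.mp hdist)
  | (k+2), hdist =>
  obtain ⟨p, hp⟩ := hconn.exists_walk_length_eq_dist u v
  obtain ⟨w, hvw, q, hq⟩ := Walk.exists_eq_cons_of_ne (Ne.symm hne) p.reverse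
  have hqlen : q.length + 1 = k + 2 := by
    have := congrArg Walk.length hq
    rw [Walk.length_reverse, Walk.length_cons, hp, hdist] at this
    omega
  have hdw_le : H.dist u w ≤ k + 1 := by
    have := dist_le q.reverse
    rw [Walk.length_reverse] at this
    omega
  have hdw_ge : k + 1 ≤ H.dist u w := by
    have htri : H.dist u v ≤ H.dist u w + H.dist w v := hconn.dist_triangle
    have h1 : H.dist w v ≤ 1 := by
      have := dist_le (Walk.cons hvw.symm Walk.nil)
      simpa using this
    omega
  have hdw : H.dist u w = k + 1 := le_antisymm hdw_le hdw_ge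
  have huw : u ≠ w := by
    intro h; rw [h, SimpleGraph.dist_self] at hdw; omega
  obtain ⟨a, c0, hc0, hu0, hw0⟩ := IH (k+1) (by omega) u w hdw huw
  set C := c0.rotate w hw0 with hCdef
  have hC : C.IsCycle := hc0.rotate hw0
  have huC : u ∈ C.support := (mem_support_rotate_iff hc0 hw0).mpr hu0
  by_cases hvC : v ∈ C.support
  · exact ⟨w, C, hC, huC, hvC⟩
  obtain ⟨Q0, hQ0⟩ := exists_walk_avoid hns hvw.ne huw
  obtain ⟨x, hxC, R0, hR0sub, hR0c⟩ := exists_firstContact C.support Q0 huC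
  set R := R0.bypass with hRdef
  have hRp : R.IsPath := R0.bypass_isPath
  have hRsub : ∀ y ∈ R.support, y ∈ Q0.support :=
    fun y hy => hR0sub y (R0.support_bypass_subset hy)
  have hRc : ∀ y ∈ R.support, y ∈ C.support → y = x :=
    fun y hy => hR0c y (R0.support_bypass_subset hy)
  have hwR : w ∉ R.support := fun hw' => hQ0 (hRsub w hw')
  have hxw : x ≠ w := fun h => hwR (h ▸ R.end_mem_support)
  obtain ⟨hTp, hDp⟩ := isPath_takeUntil_of_isCycle hC hxC hxw
  have huTD : u ∈ (C.takeUntil x hxC).support ∨ u ∈ (C.dropUntil x hxC).support := by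
    have h' := huC
    rw [← C.take_spec hxC, Walk.mem_support_append_iff] at h'
    exact h'
  obtain ⟨S, hSp, hSsub, huS⟩ :
      ∃ S : H.Walk w x, S.IsPath ∧ (∀ y ∈ S.support, y ∈ C.support) ∧ u ∈ S.support := by
    rcases huTD with h | h
    · exact ⟨C.takeUntil x hxC, hTp, fun y hy => C.support_takeUntil_subset hxC hy, h⟩
    · refine ⟨(C.dropUntil x hxC).reverse, hDp.reverse, fun y hy => ?_, ?_⟩
      · rw [Walk.support_reverse, List.mem_reverse] at hy
        exact C.support_dropUntil_subset hxC hy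
      · rw [Walk.support_reverse, List.mem_reverse]
        exact h
  set P := S.append R.reverse with hPdef
  have hPp : P.IsPath := by
    rw [Walk.isPath_def, hPdef, Walk.support_append, List.nodup_append]
    refine ⟨hSp.support_nodup, (hRp.reverse.support_nodup).sublist (List.tail_sublist _), ?_⟩
    intro y hyS z hyT hyz
    subst hyz
    have hyR : y ∈ R.support := by
      rw [← List.mem_reverse, ← Walk.support_reverse]
      exact List.mem_of_mem_tail hyT
    have hyx : y = x := hRc y hyR (hSsub y hyS)
    subst hyx
    have : R.reverse.support.Nodup := hRp.reverse.support_nodup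
    rw [R.reverse.support_eq_cons, List.nodup_cons] at this
    exact this.1 hyT
  have hedge : s(v, w) ∉ P.edges := by
    intro he
    rw [hPdef, Walk.edges_append, List.mem_append] at he
    rcases he with he | he
    · exact hvC (hSsub v (Walk.fst_mem_support_of_mem_edges S he))
    · rw [Walk.edges_reverse, List.mem_reverse] at he
      exact hwR (Walk.snd_mem_support_of_mem_edges R he)
  have hcyc2 : (Walk.cons hvw P).IsCycle := (Walk.cons_isCycle_iff P hvw).mpr ⟨hPp, hedge⟩
  refine ⟨v, Walk.cons hvw P, hcyc2, ?_, Walk.start_mem_support _⟩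
  rw [Walk.support_cons, List.mem_cons]
  right
  rw [hPdef, Walk.mem_support_append_iff]
  exact Or.inl huS

end Helpers

/-- If d ≤ 2r - 2 and every cycle of G has length < 4r - 2d, then every
nonseparable subgraph B of G other than K₂ has diameter (within B) < 2r - d. -/
theorem stmt_4 {V : Type*} [Fintype V] (G : SimpleGraph V) (hconn : G.Connected)
    (r d : ℕ) (hr : r = rad G) (hd : d = diamG G) (h : d + 2 ≤ 2 * r)
    (hcyc : ∀ (v : V) (c : G.Walk v v), c.IsCycle → c.length + 2 * d < 4 * r)
    (B : G.Subgraph) (hBconn : B.coe.Connected) (hBnontriv : B.verts.Nontrivial)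
    (hBnosep : ∀ v : B.verts, ¬ IsCutVertex B.coe v)
    (hK2 : ¬ Nonempty (B.coe ≃g (⊤ : SimpleGraph (Fin 2)))) :
    ∀ u v : B.verts, B.coe.dist u v + d < 2 * r := by
  classical
  intro u v
  have hns : ∀ w : ↥B.verts, (B.coe.induce {x | x ≠ w}).Connected :=
    fun w => not_not.mp (hBnosep w)
  by_cases huv : u = v
  · subst huv; rw [SimpleGraph.dist_self]; omega
  obtain ⟨a, c, hc, hu, hv⟩ := exists_cycle_through hBconn hns hK2 (B.coe.dist u v) u v rfl huv
  set c1 := c.rotate u hu with hc1def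
  have hc1 : c1.IsCycle := hc.rotate hu
  have hv1 : v ∈ c1.support := (mem_support_rotate_iff hc hu).mpr hv
  have hlen : (c1.takeUntil v hv1).length + (c1.dropUntil v hv1).length = c1.length := by
    rw [← Walk.length_append, c1.take_spec hv1]
  have h1 : B.coe.dist u v ≤ (c1.takeUntil v hv1).length := dist_le _
  have h2 : B.coe.dist u v ≤ (c1.dropUntil v hv1).length := by
    rw [dist_comm]; exact dist_le _
  have hmap : (c1.map B.hom).IsCycle := hc1.map Subgraph.hom_injective
  have hlt := hcyc _ (c1.map B.hom) hmap
  rw [Walk.length_map] at hlt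
  omega
end

section
/- Let G be a finite connected graph with radius r and diameter d such that d ≤ 2r - 2. Then the circumference of G is at least 4r - 2d ≥ 4 (in particular G has a cycle of length at least 4). -/
open SimpleGraph

namespace StmtElevenAux

open SimpleGraph Walk

variable {V : Type*} {G : SimpleGraph V}

/-- Any closed walk through `u` and `v` has length at least `2 * dist u v`. -/
lemma two_mul_dist_le_length {a u v : V} (Z : G.Walk a a)
    (hu : u ∈ Z.support) (hv : v ∈ Z.support) : 2 * G.dist u v ≤ Z.length := by
  classical
  have hspec := Z.take_spec hu
  have hlen : (Z.takeUntil u hu).length + (Z.dropUntil u hu).length = Z.length := by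
    rw [← Walk.length_append, hspec]
  have hv2 : v ∈ (Z.takeUntil u hu).support ∨ v ∈ (Z.dropUntil u hu).support := by
    rw [← Walk.mem_support_append_iff, hspec]; exact hv
  have hcomm : G.dist u v = G.dist v u := SimpleGraph.dist_comm
  rcases hv2 with hvT | hvD
  · set T := Z.takeUntil u hu with hT
    set D := Z.dropUntil u hu with hD
    have hlenT : (T.takeUntil v hvT).length + (T.dropUntil v hvT).length = T.length := by
      rw [← Walk.length_append, Walk.take_spec]
    have d1 : G.dist v u ≤ (T.dropUntil v hvT).length := SimpleGraph.dist_le _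
    have d2 : G.dist u v ≤ (D.append (T.takeUntil v hvT)).length := SimpleGraph.dist_le _
    rw [Walk.length_append] at d2
    omega
  · set T := Z.takeUntil u hu with hT
    set D := Z.dropUntil u hu with hD
    have hlenD : (D.takeUntil v hvD).length + (D.dropUntil v hvD).length = D.length := by
      rw [← Walk.length_append, Walk.take_spec]
    have d1 : G.dist u v ≤ (D.takeUntil v hvD).length := SimpleGraph.dist_le _
    have d2 : G.dist v u ≤ ((D.dropUntil v hvD).append T).length := SimpleGraph.dist_le _
    rw [Walk.length_append] at d2
    omega

/-- If `c` lies on every walk from `u` to `v`, distances add up through `c`. -/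
lemma dist_add_of_sep (hconn : G.Connected) {u v c : V}
    (hsep : ∀ W : G.Walk u v, c ∈ W.support) :
    G.dist u v = G.dist u c + G.dist c v := by
  classical
  obtain ⟨p, hp⟩ := hconn.exists_walk_length_eq_dist u v
  have hc := hsep p
  have h1 : G.dist u c ≤ (p.takeUntil c hc).length := SimpleGraph.dist_le _
  have h2 : G.dist c v ≤ (p.dropUntil c hc).length := SimpleGraph.dist_le _
  have h3 : (p.takeUntil c hc).length + (p.dropUntil c hc).length = p.length := by
    rw [← Walk.length_append, Walk.take_spec]
  have h4 := hconn.dist_triangle (u := u) (v := c) (w := v)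
  omega

/-- Along a path ending in `S` there is a first vertex belonging to `S`. -/
lemma first_hit (S : Set V) :
    ∀ {x y : V} (R : G.Walk x y), R.IsPath → y ∈ S →
    ∃ (z : V) (R' : G.Walk x z), R'.IsPath ∧ z ∈ S ∧
      (∀ t ∈ R'.support, t ∈ S → t = z) ∧ (∀ t ∈ R'.support, t ∈ R.support) := by
  intro x y R
  induction R with
  | nil =>
    intro _ hy
    exact ⟨_, Walk.nil, Walk.IsPath.nil, hy,
      fun t ht _ => by simpa using ht, fun t ht => ht⟩
  | @cons a b c2 h R2 ih =>
    intro hpath hy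
    by_cases haS : a ∈ S
    · refine ⟨a, Walk.nil, Walk.IsPath.nil, haS, fun t ht _ => by simpa using ht, ?_⟩
      intro t ht
      have : t = a := by simpa using ht
      subst this
      exact Walk.start_mem_support _
    · have hpath2 : R2.IsPath := (Walk.cons_isPath_iff h R2).mp hpath |>.1
      have hanotin : a ∉ R2.support := (Walk.cons_isPath_iff h R2).mp hpath |>.2
      obtain ⟨z, R2', hp', hz, honly, hsub⟩ := ih hpath2 hy
      refine ⟨z, Walk.cons h R2', ?_, hz, ?_, ?_⟩
      · rw [Walk.cons_isPath_iff]
        exact ⟨hp', fun hmem => hanotin (hsub _ hmem)⟩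
      · intro t ht htS
        rw [Walk.support_cons] at ht
        rcases List.mem_cons.mp ht with rfl | ht'
        · exact absurd htS haS
        · exact honly t ht' htS
      · intro t ht
        rw [Walk.support_cons] at ht
        rw [Walk.support_cons]
        rcases List.mem_cons.mp ht with rfl | ht'
        · exact List.mem_cons_self
        · exact List.mem_cons_of_mem _ (hsub t ht')

lemma mem_support_rotate_iff [DecidableEq V] {a u : V} (Z : G.Walk a a)
    (h : u ∈ Z.support) (t : V) :
    t ∈ (Z.rotate u h).support ↔ t ∈ Z.support := by
  unfold Walk.rotate
  rw [Walk.mem_support_append_iff]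
  conv_rhs => rw [← Z.take_spec h]
  rw [Walk.mem_support_append_iff]
  exact or_comm

/-- From a cycle through `y`, `w`, `u` one can extract a path from `y` to `w`
through `u` staying on the cycle. -/
lemma cycle_arc [DecidableEq V] {a : V} (Z : G.Walk a a) (hZ : Z.IsCycle)
    {y w u : V} (hy : y ∈ Z.support) (hw : w ∈ Z.support) (hu : u ∈ Z.support)
    (hyw : y ≠ w) :
    ∃ A : G.Walk y w, A.IsPath ∧ u ∈ A.support ∧ ∀ t ∈ A.support, t ∈ Z.support := by
  set Z' : G.Walk y y := Z.rotate y hy with hZ'def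
  have hZ'c : Z'.IsCycle := hZ.rotate hy
  have hmemiff : ∀ t, t ∈ Z'.support ↔ t ∈ Z.support := mem_support_rotate_iff Z hy
  have hw' : w ∈ Z'.support := (hmemiff w).mpr hw
  have hu' : u ∈ Z'.support := (hmemiff u).mpr hu
  set A1 := Z'.takeUntil w hw' with hA1
  set A2 := Z'.dropUntil w hw' with hA2
  have hspec : A1.append A2 = Z' := Z'.take_spec hw'
  have hsupp : Z'.support = A1.support ++ A2.support.tail := by
    rw [← hspec, Walk.support_append]
  have htail : Z'.support.tail = A1.support.tail ++ A2.support.tail := by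
    rw [hsupp, Walk.support_eq_cons A1]
    simp
  have hnd : Z'.support.tail.Nodup := hZ'c.support_nodup
  rw [htail] at hnd
  obtain ⟨hnd1, hnd2, hdisj⟩ := List.nodup_append.mp hnd
  -- y is in A2's tail
  have hyA2 : y ∈ A2.support.tail := by
    have : y ∈ A2.support := Walk.end_mem_support A2
    rw [Walk.support_eq_cons A2] at this
    rcases List.mem_cons.mp this with h' | h'
    · exact absurd h' hyw
    · exact h'
  have hyA1 : y ∉ A1.support.tail := fun hmem => hdisj _ hmem _ hyA2 rfl
  have hA1path : A1.IsPath := by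
    rw [Walk.isPath_def, Walk.support_eq_cons A1]
    exact List.nodup_cons.mpr ⟨hyA1, hnd1⟩
  -- w is in A1's tail
  have hwA1 : w ∈ A1.support.tail := by
    have : w ∈ A1.support := Walk.end_mem_support A1
    rw [Walk.support_eq_cons A1] at this
    rcases List.mem_cons.mp this with h' | h'
    · exact absurd h' (Ne.symm hyw)
    · exact h'
  have hwA2 : w ∉ A2.support.tail := fun hmem => hdisj _ hwA1 _ hmem rfl
  have hA2path : A2.IsPath := by
    rw [Walk.isPath_def, Walk.support_eq_cons A2]
    exact List.nodup_cons.mpr ⟨hwA2, hnd2⟩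
  have hA1sub : ∀ t ∈ A1.support, t ∈ Z.support := by
    intro t ht
    exact (hmemiff t).mp (Walk.support_takeUntil_subset Z' hw' ht)
  have hA2sub : ∀ t ∈ A2.support, t ∈ Z.support := by
    intro t ht
    exact (hmemiff t).mp (Walk.support_dropUntil_subset Z' hw' ht)
  -- which arc contains u
  have hu2 : u ∈ A1.support ∨ u ∈ A2.support.tail := by
    rw [← List.mem_append, ← hsupp]; exact hu'
  rcases hu2 with huA1 | huA2
  · exact ⟨A1, hA1path, huA1, hA1sub⟩
  · refine ⟨A2.reverse, hA2path.reverse, ?_, ?_⟩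
    · rw [Walk.support_reverse, List.mem_reverse]
      rw [Walk.support_eq_cons A2]
      exact List.mem_cons_of_mem _ huA2
    · intro t ht
      rw [Walk.support_reverse, List.mem_reverse] at ht
      exact hA2sub t ht

/-- Local Menger-type result: if `dist u v ≥ 2` and no single vertex lies on all
`u`-`v` walks, then `u` and `v` lie on a common cycle. -/
lemma common_cycle (hconn : G.Connected) :
    ∀ (n : ℕ), 2 ≤ n → ∀ u v : V, G.dist u v = n →
      (∀ s : V, s ≠ u → s ≠ v → ∃ W : G.Walk u v, s ∉ W.support) →
      ∃ (a : V) (Z : G.Walk a a), Z.IsCycle ∧ u ∈ Z.support ∧ v ∈ Z.support := by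
  intro n
  induction n using Nat.strong_induction_on with
  | _ n ih =>
    intro hn2 u v hdist hyp
    classical
    have hne : u ≠ v := by
      intro h'
      subst h'
      rw [SimpleGraph.dist_self] at hdist
      omega
    obtain ⟨p, hplen⟩ := hconn.exists_walk_length_eq_dist u v
    have hppath : p.IsPath := p.isPath_of_length_eq_dist hplen
    obtain ⟨w, hvw, q', hq'⟩ := Walk.exists_eq_cons_of_ne (Ne.symm hne) p.reverse
    have hrevpath : p.reverse.IsPath := hppath.reverse
    have hvq' : v ∉ q'.support := by
      have hnodup := hrevpath.support_nodup
      rw [hq', Walk.support_cons] at hnodup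
      exact (List.nodup_cons.mp hnodup).1
    set q : G.Walk u w := q'.reverse with hqdef
    have hvq : v ∉ q.support := by
      rw [hqdef, Walk.support_reverse, List.mem_reverse]; exact hvq'
    have hqlen : q.length = n - 1 := by
      have h1 : p.reverse.length = n := by rw [Walk.length_reverse, hplen, hdist]
      rw [hq', Walk.length_cons] at h1
      rw [hqdef, Walk.length_reverse]
      omega
    have hdw : G.dist u w = n - 1 := by
      have hle : G.dist u w ≤ n - 1 := hqlen ▸ SimpleGraph.dist_le q
      have hwv1 : G.dist w v = 1 := SimpleGraph.dist_eq_one_iff_adj.mpr hvw.symm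
      have htri : G.dist u v ≤ G.dist u w + G.dist w v := hconn.dist_triangle
      omega
    have hwu : w ≠ u := by
      intro h'
      subst h'
      rw [SimpleGraph.dist_self] at hdw
      omega
    have hwv' : w ≠ v := hvw.ne'
    rcases eq_or_lt_of_le hn2 with hn2' | hn3
    · -- base case : dist u v = 2
      have hadj_uw : G.Adj u w := by
        have : G.dist u w = 1 := by omega
        exact SimpleGraph.dist_eq_one_iff_adj.mp this
      obtain ⟨Q, hQ⟩ := hyp w hwu hwv'
      set P1 : G.Walk u v := Q.bypass with hP1
      have hP1path : P1.IsPath := Q.bypass_isPath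
      have hwP1 : w ∉ P1.support := fun hm => hQ (Q.support_bypass_subset hm)
      set P : G.Walk v u := P1.reverse with hP
      have hPpath : P.IsPath := hP1path.reverse
      have hwP : w ∉ P.support := by
        rw [hP, Walk.support_reverse, List.mem_reverse]; exact hwP1
      set X : G.Walk w u := Walk.cons hvw.symm P with hX
      set F : G.Walk u u := Walk.cons hadj_uw X with hF
      have hFc : F.IsCycle := by
        rw [hF, Walk.cons_isCycle_iff]
        constructor
        · rw [hX, Walk.cons_isPath_iff]
          exact ⟨hPpath, hwP⟩
        · rw [hX, Walk.edges_cons]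
          intro hmem
          rcases List.mem_cons.mp hmem with heq | hmem'
          · rcases Sym2.eq_iff.mp heq with ⟨h1, h2⟩ | ⟨h1, h2⟩
            · exact hwu h1.symm
            · exact hne h1
          · exact hwP (Walk.snd_mem_support_of_mem_edges P hmem')
      refine ⟨u, F, hFc, Walk.start_mem_support F, ?_⟩
      rw [hF, Walk.support_cons]
      refine List.mem_cons_of_mem _ ?_
      rw [hX, Walk.support_cons]
      exact List.mem_cons_of_mem _ (Walk.start_mem_support P)
    · -- inductive step : dist u v ≥ 3
      have hn1 : 2 ≤ n - 1 := by omega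
      have hyp' : ∀ s : V, s ≠ u → s ≠ w → ∃ W : G.Walk u w, s ∉ W.support := by
        intro s hsu hsw
        by_cases hsv : s = v
        · subst hsv; exact ⟨q, hvq⟩
        · obtain ⟨π, hπ⟩ := hyp s hsu hsv
          refine ⟨π.concat hvw, ?_⟩
          rw [Walk.support_concat]
          intro hmem
          rcases List.mem_append.mp hmem with h1 | h2
          · exact hπ h1
          · have : s = w := by simpa using h2
            exact hsw this
      obtain ⟨a, Z, hZc, huZ, hwZ⟩ := ih (n - 1) (by omega) hn1 u w hdw hyp'
      by_cases hvZ : v ∈ Z.support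
      · exact ⟨a, Z, hZc, huZ, hvZ⟩
      · obtain ⟨R0, hR0⟩ := hyp w hwu hwv'
        set R1 : G.Walk u v := R0.bypass with hR1def
        have hR1path : R1.IsPath := R0.bypass_isPath
        have hwR1 : w ∉ R1.support := fun hm => hR0 (R0.support_bypass_subset hm)
        set R : G.Walk v u := R1.reverse with hRdef
        have hRpath : R.IsPath := hR1path.reverse
        have hwR : w ∉ R.support := by
          rw [hRdef, Walk.support_reverse, List.mem_reverse]; exact hwR1
        obtain ⟨y, R', hR'path, hyZ, honly, hsub⟩ :=
          first_hit {t | t ∈ Z.support} R hRpath huZ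
        have hyZ' : y ∈ Z.support := hyZ
        have hyR : y ∈ R.support := hsub _ (Walk.end_mem_support R')
        have hyw : y ≠ w := fun h' => hwR (h' ▸ hyR)
        obtain ⟨A, hApath, huA, hAsub⟩ := cycle_arc Z hZc hyZ' hwZ huZ hyw
        have hwR' : w ∉ R'.support := fun hm => hwR (hsub _ hm)
        set RA : G.Walk v w := R'.append A with hRAdef
        have hRApath : RA.IsPath := by
          rw [hRAdef, Walk.isPath_def, Walk.support_append]
          refine List.Nodup.append hR'path.support_nodup ?_ ?_
          · have := hApath.support_nodup
            rw [Walk.support_eq_cons A] at this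
            exact (List.nodup_cons.mp this).2
          · intro t htR' htA
            have htZ : t ∈ Z.support := by
              apply hAsub
              rw [Walk.support_eq_cons A]
              exact List.mem_cons_of_mem _ htA
            have : t = y := honly t htR' htZ
            subst this
            have := hApath.support_nodup
            rw [Walk.support_eq_cons A] at this
            exact (List.nodup_cons.mp this).1 htA
        have hedge : s(w, v) ∉ RA.edges := by
          rw [hRAdef, Walk.edges_append]
          intro hmem
          rcases List.mem_append.mp hmem with h1 | h2
          · exact hwR (hsub _ (Walk.fst_mem_support_of_mem_edges R' h1))
          · exact hvZ (hAsub _ (Walk.snd_mem_support_of_mem_edges A h2))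
        set F : G.Walk w w := Walk.cons hvw.symm RA with hFdef
        have hFc : F.IsCycle := by
          rw [hFdef, Walk.cons_isCycle_iff]
          exact ⟨hRApath, hedge⟩
        refine ⟨w, F, hFc, ?_, ?_⟩
        · rw [hFdef, Walk.support_cons]
          refine List.mem_cons_of_mem _ ?_
          rw [hRAdef, Walk.mem_support_append_iff]
          exact Or.inr huA
        · rw [hFdef, Walk.support_cons]
          refine List.mem_cons_of_mem _ ?_
          rw [hRAdef, Walk.mem_support_append_iff]
          exact Or.inl (Walk.start_mem_support R')

end StmtElevenAux

open StmtElevenAux in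
/-- A finite connected graph with d ≤ 2r - 2 has circumference at least
4r - 2d ≥ 4; in particular it has a cycle of length at least 4. -/
theorem stmt_11 {V : Type*} [Fintype V] (G : SimpleGraph V) (hconn : G.Connected)
    (r d : ℕ) (hr : r = rad G) (hd : d = diamG G) (h : d + 2 ≤ 2 * r) :
    4 ≤ 4 * r - 2 * d ∧
      ∃ (v : V) (c : G.Walk v v), c.IsCycle ∧ 4 * r - 2 * d ≤ c.length := by
  classical
  haveI hVne : Nonempty V := hconn.nonempty
  -- a central vertex z and a farthest vertex x from it
  have hradmem : rad G ∈ Set.range (ecc G) := Nat.sInf_mem (Set.range_nonempty _)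
  obtain ⟨z, hz⟩ := hradmem
  obtain ⟨x, _, hx⟩ := Finset.exists_mem_eq_sup Finset.univ Finset.univ_nonempty (G.dist z)
  have heccz : ecc G z = G.dist z x := hx
  have hzx : G.dist z x = r := by rw [← heccz, hz, hr]
  have hecc_le_d : ∀ u : V, ecc G u ≤ d := by
    intro u; rw [hd]; exact Finset.le_sup (Finset.mem_univ u)
  have hdist_le_ecc : ∀ u v' : V, G.dist u v' ≤ ecc G u := by
    intro u v'; exact Finset.le_sup (Finset.mem_univ v')
  have hDle : ∀ u v' : V, G.dist u v' ≤ d :=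
    fun u v' => le_trans (hdist_le_ecc u v') (hecc_le_d u)
  have hre : ∀ u : V, r ≤ ecc G u := by
    intro u; rw [hr]; exact Nat.sInf_le ⟨u, rfl⟩
  have hzr : ∀ u : V, G.dist z u ≤ r := by
    intro u
    have := hdist_le_ecc z u
    rw [heccz, hzx] at this
    exact this
  have hrd : r ≤ d := by
    have := hecc_le_d z
    rw [heccz, hzx] at this
    exact this
  refine ⟨by omega, ?_⟩
  by_contra hno
  push_neg at hno
  -- if two vertices lie on a common cycle then their distance is < 2r - d
  have key : ∀ u v' : V,
      (∃ (a : V) (Z : G.Walk a a), Z.IsCycle ∧ u ∈ Z.support ∧ v' ∈ Z.support) →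
      G.dist u v' < 2 * r - d := by
    rintro u v' ⟨a, Z, hZ, hu, hv⟩
    have h1 := two_mul_dist_le_length Z hu hv
    have h2 := hno a Z hZ
    omega
  -- descent step
  have step : ∀ c : V, (c ≠ z ∧ c ≠ x ∧ ∀ W : G.Walk z x, c ∈ W.support) →
      ∃ c' : V, (c' ≠ z ∧ c' ≠ x ∧ ∀ W : G.Walk z x, c' ∈ W.support) ∧
        G.dist z c' < G.dist z c := by
    rintro c ⟨hcz, hcx, hsep⟩
    have e1 : G.dist z x = G.dist z c + G.dist c x := dist_add_of_sep hconn hsep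
    -- a far witness for c
    obtain ⟨u, _, hu⟩ := Finset.exists_mem_eq_sup Finset.univ Finset.univ_nonempty (G.dist c)
    have hru : r ≤ G.dist c u := by
      have := hre c
      rw [show ecc G c = G.dist c u from hu] at this
      exact this
    have hcu : c ≠ u := by
      rintro rfl
      rw [SimpleGraph.dist_self] at hru
      omega
    by_cases hW : ∃ W : G.Walk z u, c ∉ W.support
    · obtain ⟨W, hWc⟩ := hW
      have hxu_all : ∀ π : G.Walk x u, c ∈ π.support := by
        intro π
        by_contra hπ
        have hcomb : c ∈ (W.append π.reverse).support := hsep (W.append π.reverse)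
        rw [SimpleGraph.Walk.mem_support_append_iff] at hcomb
        rcases hcomb with h1 | h2
        · exact hWc h1
        · rw [SimpleGraph.Walk.support_reverse, List.mem_reverse] at h2
          exact hπ h2
      have e2 : G.dist x u = G.dist x c + G.dist c u := dist_add_of_sep hconn hxu_all
      have hxu_le : G.dist x u ≤ d := hDle x u
      have hcx' : G.dist c x = G.dist x c := SimpleGraph.dist_comm
      have hzc_ge : 2 * r - d ≤ G.dist z c := by omega
      -- no cycle through z and c, so there is a separator for (z, c)
      have hncyc : ¬ (∃ (a : V) (Z : G.Walk a a),
          Z.IsCycle ∧ z ∈ Z.support ∧ c ∈ Z.support) := by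
        intro hC
        have := key z c hC
        omega
      have hdzc2 : 2 ≤ G.dist z c := by omega
      have hsepexists : ∃ s : V, s ≠ z ∧ s ≠ c ∧ ∀ W' : G.Walk z c, s ∈ W'.support := by
        by_contra hS
        push_neg at hS
        exact hncyc (common_cycle hconn (G.dist z c) hdzc2 z c rfl hS)
      obtain ⟨s, hsz, hsc, hss⟩ := hsepexists
      have hsx : s ≠ x := by
        intro hsxeq
        have hss' : ∀ W' : G.Walk z c, x ∈ W'.support := fun W' => hsxeq ▸ hss W'
        have e3 : G.dist z c = G.dist z x + G.dist x c := dist_add_of_sep hconn hss'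
        have h4 : G.dist z c ≤ r := hzr c
        have h5 : 0 < G.dist x c := hconn.pos_dist_of_ne (fun h' => hcx h'.symm)
        omega
      have hsepx : ∀ W' : G.Walk z x, s ∈ W'.support := by
        intro W'
        have hcW := hsep W'
        have : s ∈ (W'.takeUntil c hcW).support := hss _
        exact W'.support_takeUntil_subset hcW this
      have e4 : G.dist z c = G.dist z s + G.dist s c := dist_add_of_sep hconn hss
      have hpos : 0 < G.dist s c := hconn.pos_dist_of_ne (fun h' => hsc h')
      exact ⟨s, ⟨hsz, hsx, hsepx⟩, by omega⟩
    · push_neg at hW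
      have e2 : G.dist z u = G.dist z c + G.dist c u := dist_add_of_sep hconn hW
      have h1 : G.dist z u ≤ r := hzr u
      have h2 : 0 < G.dist z c := hconn.pos_dist_of_ne (fun h' => hcz h'.symm)
      omega
  -- start of the descent
  have start : ∃ c : V, c ≠ z ∧ c ≠ x ∧ ∀ W : G.Walk z x, c ∈ W.support := by
    have hncyc : ¬ (∃ (a : V) (Z : G.Walk a a),
        Z.IsCycle ∧ z ∈ Z.support ∧ x ∈ Z.support) := by
      intro hC
      have := key z x hC
      omega
    by_contra hS
    push_neg at hS
    exact hncyc (common_cycle hconn r (by omega) z x hzx hS)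
  obtain ⟨c0, hc0⟩ := start
  have noc : ∀ n : ℕ, ∀ c : V,
      (c ≠ z ∧ c ≠ x ∧ ∀ W : G.Walk z x, c ∈ W.support) → G.dist z c ≤ n → False := by
    intro n
    induction n with
    | zero =>
      intro c hc hle
      have := hconn.pos_dist_of_ne (fun h' => hc.1 h'.symm)
      omega
    | succ n ihn =>
      intro c hc hle
      obtain ⟨c', hc', hlt⟩ := step c hc
      exact ihn c' hc' (by omega)
  exact noc (G.dist z c0) c0 hc0 le_rfl
end
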